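/- If cov(M) = cof(M), then there exists a set X ⊆ ℝ which has the Menger property U_fin(O,O) but not the Hurewicz property U_fin(O,Γ). -/

import Mathlib

open Filter Set Topology

/-- `X` has the Menger property `U_fin(O, O)`. -/
def MengerSet (X : Set ℝ) : Prop :=
  ∀ 𝒰 : ℕ → Set (Set ℝ),
    (∀ n, (∀ U ∈ 𝒰 n, IsOpen U) ∧ X ⊆ ⋃₀ 𝒰 n) →
    ∃ 𝒱 : ℕ → Set (Set ℝ),
      (∀ n, 𝒱 n ⊆ 𝒰 n ∧ (𝒱 n).Finite) ∧ X ⊆ ⋃ n, ⋃₀ 𝒱 n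

/-- `X` has the Hurewicz property `U_fin(O, Γ)`. -/
def HurewiczSet (X : Set ℝ) : Prop :=
  ∀ 𝒰 : ℕ → Set (Set ℝ),
    (∀ n, (∀ U ∈ 𝒰 n, IsOpen U) ∧ X ⊆ ⋃₀ 𝒰 n) →
    ∃ 𝒱 : ℕ → Set (Set ℝ),
      (∀ n, 𝒱 n ⊆ 𝒰 n ∧ (𝒱 n).Finite) ∧
      ∀ x ∈ X, ∀ᶠ n in atTop, x ∈ ⋃₀ 𝒱 n

/-- `cov(M)`: the least cardinality of a family of meager sets covering ℝ. -/
noncomputable def covMeager : Cardinal :=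
  sInf {c : Cardinal | ∃ 𝓕 : Set (Set ℝ), Cardinal.mk 𝓕 = c ∧
    (∀ M ∈ 𝓕, IsMeagre M) ∧ ⋃₀ 𝓕 = univ}

/-- `cof(M)`: the least cardinality of a cofinal family of meager sets. -/
noncomputable def cofMeager : Cardinal :=
  sInf {c : Cardinal | ∃ 𝓕 : Set (Set ℝ), Cardinal.mk 𝓕 = c ∧
    (∀ M ∈ 𝓕, IsMeagre M) ∧ ∀ M : Set ℝ, IsMeagre M → ∃ F ∈ 𝓕, M ⊆ F}


section Helpers
open Cardinal in
lemma myIsMeagre_sUnion_countable {𝓖 : Set (Set ℝ)} (hc : 𝓖.Countable)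
    (hm : ∀ M ∈ 𝓖, IsMeagre M) : IsMeagre (⋃₀ 𝓖) := by
  rw [IsMeagre, compl_sUnion]
  exact (countable_sInter_mem (hc.image _)).2 (by
    rintro t ⟨M, hM, rfl⟩; exact hm M hM)

lemma myNotMeagreUniv : ¬ IsMeagre (univ : Set ℝ) := by
  intro h
  rw [IsMeagre, compl_univ] at h
  have := dense_of_mem_residual h
  rcases this.exists_mem_open isOpen_univ ⟨0, trivial⟩ with ⟨x, hx, -⟩
  exact hx

lemma myMeagre_singleton (r : ℝ) : IsMeagre ({r} : Set ℝ) := by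
  rw [isMeagre_iff_countable_union_isNowhereDense]
  refine ⟨{{r}}, ?_, countable_singleton _, by simp⟩
  rintro t ht
  simp only [mem_singleton_iff] at ht
  subst ht
  rw [IsNowhereDense, closure_singleton, interior_singleton]

lemma covSetNonempty : {c : Cardinal | ∃ 𝓕 : Set (Set ℝ), Cardinal.mk 𝓕 = c ∧
    (∀ M ∈ 𝓕, IsMeagre M) ∧ ⋃₀ 𝓕 = univ}.Nonempty := by
  refine ⟨_, Set.range (fun r : ℝ => ({r} : Set ℝ)), rfl, ?_, ?_⟩
  · rintro M ⟨r, rfl⟩; exact myMeagre_singleton r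
  · ext x; simp only [sUnion_range, mem_iUnion, mem_singleton_iff, mem_univ, iff_true]
    exact ⟨x, rfl⟩

lemma covMeager_mem : ∃ 𝓕 : Set (Set ℝ), Cardinal.mk 𝓕 = covMeager ∧
    (∀ M ∈ 𝓕, IsMeagre M) ∧ ⋃₀ 𝓕 = univ := by
  have h : covMeager ∈ {c : Cardinal | ∃ 𝓕 : Set (Set ℝ), Cardinal.mk 𝓕 = c ∧
      (∀ M ∈ 𝓕, IsMeagre M) ∧ ⋃₀ 𝓕 = univ} := csInf_mem covSetNonempty
  exact h

lemma cofMeager_mem : ∃ 𝓕 : Set (Set ℝ), Cardinal.mk 𝓕 = cofMeager ∧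
    (∀ M ∈ 𝓕, IsMeagre M) ∧ ∀ M : Set ℝ, IsMeagre M → ∃ F ∈ 𝓕, M ⊆ F := by
  have hne : {c : Cardinal | ∃ 𝓕 : Set (Set ℝ), Cardinal.mk 𝓕 = c ∧
      (∀ M ∈ 𝓕, IsMeagre M) ∧ ∀ M : Set ℝ, IsMeagre M → ∃ F ∈ 𝓕, M ⊆ F}.Nonempty := by
    refine ⟨Cardinal.mk {M : Set ℝ | IsMeagre M}, ?_⟩
    exact ⟨{M : Set ℝ | IsMeagre M}, rfl, fun M hM => hM, fun M hM => ⟨M, hM, subset_rfl⟩⟩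
  have h := csInf_mem hne
  exact h

lemma sUnion_ne_univ_of_lt_cov {𝓖 : Set (Set ℝ)} (hm : ∀ M ∈ 𝓖, IsMeagre M)
    (hc : Cardinal.mk 𝓖 < covMeager) : ⋃₀ 𝓖 ≠ univ := by
  intro he
  have hmem : Cardinal.mk 𝓖 ∈ {c : Cardinal | ∃ 𝓕 : Set (Set ℝ), Cardinal.mk 𝓕 = c ∧
      (∀ M ∈ 𝓕, IsMeagre M) ∧ ⋃₀ 𝓕 = univ} := by exact ⟨𝓖, rfl, hm, he⟩
  exact absurd (csInf_le' hmem) (not_le.2 hc)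

lemma aleph0_lt_covMeager : Cardinal.aleph0 < covMeager := by
  rcases covMeager_mem with ⟨𝓕, hmk, hm, hu⟩
  by_contra hle
  rw [not_lt] at hle
  have hc : 𝓕.Countable := by
    rw [← Cardinal.le_aleph0_iff_set_countable, hmk]; exact hle
  exact myNotMeagreUniv (hu ▸ myIsMeagre_sUnion_countable hc hm)


noncomputable def gOf (t : ℝ) (m : ℕ) : ℕ := ⌊(Int.fract (t * 2 ^ m))⁻¹⌋₊

lemma nwd_N (f : ℕ → ℕ) : IsNowhereDense {t : ℝ | ∀ m, gOf t m < f m} := by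
  set N := {t : ℝ | ∀ m, gOf t m < f m} with hN
  rw [IsNowhereDense, eq_empty_iff_forall_notMem]
  intro t0 ht0
  rcases Metric.isOpen_iff.1 isOpen_interior t0 ht0 with ⟨ε, hε, hball⟩
  have hsub : Metric.ball t0 ε ⊆ closure N := hball.trans interior_subset
  obtain ⟨m, hm⟩ : ∃ m : ℕ, ((1:ℝ)/2) ^ m < ε / 2 :=
    exists_pow_lt_of_lt_one (by linarith) (by norm_num)
  set c : ℝ := 2 ^ m with hc
  have hcpos : (0:ℝ) < c := by positivity
  have hinvc : 1 / c = ((1:ℝ)/2) ^ m := by rw [hc, one_div_pow]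
  set j : ℤ := ⌊t0 * c⌋ + 1 with hj
  set δ : ℝ := 1 / ((f m : ℝ) + 2) with hδ
  have hδpos : 0 < δ := by positivity
  have hδlt : δ ≤ 1 := by
    rw [hδ, div_le_one (by positivity)]
    linarith [Nat.cast_nonneg (α := ℝ) (f m)]
  set K : Set ℝ := Ioo ((j : ℝ) / c) ((j + δ) / c) with hK
  have hKne : ((j : ℝ) / c) < ((j + δ) / c) :=
    (div_lt_div_iff_of_pos_right hcpos).2 (by linarith)
  -- K is inside the ball
  have hjlb : t0 * c < (j : ℝ) := by
    rw [hj]; push_cast; linarith [Int.lt_floor_add_one (t0 * c)]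
  have hjub : (j : ℝ) ≤ t0 * c + 1 := by
    rw [hj]; push_cast; linarith [Int.floor_le (t0 * c)]
  have hKball : K ⊆ Metric.ball t0 ε := by
    intro t ht
    rcases ht with ⟨h1, h2⟩
    rw [Metric.mem_ball, Real.dist_eq, abs_lt]
    have ht0lt : t0 < t := lt_of_le_of_lt (by rw [le_div_iff₀ hcpos]; linarith) h1
    have h2' : t < ((j : ℝ) + 1) / c := lt_of_lt_of_le h2 ((div_le_div_iff_of_pos_right hcpos).2 (by linarith))
    have e : t0 + 2 / c = (t0 * c + 2) / c := by field_simp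
    have : t < t0 + 2 / c := by
      rw [e]
      exact lt_of_lt_of_le h2' ((div_le_div_iff_of_pos_right hcpos).2 (by linarith))
    have h2c : 2 / c < ε := by
      have : 2 / c = 2 * (1/c) := by ring
      rw [this, hinvc]; linarith
    constructor <;> linarith
  -- K avoids N
  have hKdisj : ∀ t ∈ K, t ∉ N := by
    intro t ht htN
    rcases ht with ⟨h1, h2⟩
    have h1' : (j : ℝ) < t * c := by rwa [div_lt_iff₀ hcpos] at h1
    have h2' : t * c < (j : ℝ) + δ := by rw [lt_div_iff₀ hcpos] at h2; linarith
    have hfloor : ⌊t * c⌋ = j := by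
      rw [Int.floor_eq_iff]
      constructor
      · linarith
      · linarith
    have hfract : Int.fract (t * c) = t * c - j := by
      rw [← Int.self_sub_floor, hfloor]
    have hfr1 : 0 < Int.fract (t * c) := by rw [hfract]; linarith
    have hfr2 : Int.fract (t * c) < δ := by rw [hfract]; linarith
    have hinv : ((f m : ℝ) + 2) ≤ (Int.fract (t * c))⁻¹ := by
      rw [hδ] at hfr2
      have := (one_div ((f m : ℝ) + 2)) ▸ hfr2
      calc ((f m : ℝ) + 2) = (((f m : ℝ) + 2)⁻¹)⁻¹ := by rw [inv_inv]
        _ ≤ (Int.fract (t * c))⁻¹ := by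
            apply inv_anti₀ hfr1 (le_of_lt this)
    have hge : f m + 2 ≤ gOf t m := by
      apply Nat.le_floor
      show ((f m + 2 : ℕ) : ℝ) ≤ (Int.fract (t * 2 ^ m))⁻¹
      rw [← hc]
      push_cast
      exact hinv
    exact absurd (htN m) (by omega)
  -- contradiction
  obtain ⟨t, htK⟩ : K.Nonempty := nonempty_Ioo.2 hKne
  have htcl : t ∈ closure N := hsub (hKball htK)
  rcases (_root_.mem_closure_iff.1 htcl) K isOpen_Ioo htK with ⟨u, huK, huN⟩
  exact hKdisj u huK huN

lemma exists_dominator {H : Set (ℕ → ℕ)} (hH : Cardinal.mk H < covMeager) :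
    ∃ g : ℕ → ℕ, ∀ f ∈ H, ∃ m, f m ≤ g m := by
  set 𝓖 : Set (Set ℝ) := (fun f : ℕ → ℕ => {t : ℝ | ∀ m, gOf t m < f m}) '' H with h𝓖
  have hm : ∀ M ∈ 𝓖, IsMeagre M := by
    rintro M ⟨f, hf, rfl⟩
    rw [isMeagre_iff_countable_union_isNowhereDense]
    refine ⟨{{t : ℝ | ∀ m, gOf t m < f m}}, ?_, countable_singleton _, by simp⟩
    rintro s hs
    simp only [mem_singleton_iff] at hs
    subst hs
    exact nwd_N f
  have hcard : Cardinal.mk 𝓖 < covMeager := lt_of_le_of_lt Cardinal.mk_image_le hH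
  have hne := sUnion_ne_univ_of_lt_cov hm hcard
  obtain ⟨t, htn⟩ : ∃ t : ℝ, t ∉ ⋃₀ 𝓖 := by
    by_contra hco; push_neg at hco; exact hne (eq_univ_of_forall hco)
  refine ⟨gOf t, fun f hf => ?_⟩
  have ht : t ∉ {t : ℝ | ∀ m, gOf t m < f m} := fun hmem => htn ⟨_, ⟨f, hf, rfl⟩, hmem⟩
  simp only [mem_setOf_eq, not_forall, not_lt] at ht
  exact ht

lemma isMeagre_of_isNowhereDense {s : Set ℝ} (hs : IsNowhereDense s) : IsMeagre s := by
  rw [isMeagre_iff_countable_union_isNowhereDense]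
  refine ⟨{s}, ?_, countable_singleton _, by simp⟩
  rintro t ht
  simp only [mem_singleton_iff] at ht
  subst ht
  exact hs

lemma meagre_of_closed_disjoint_dense {F D : Set ℝ} (hF : IsClosed F) (hD : Dense D)
    (hdisj : F ∩ D = ∅) : IsMeagre F := by
  apply isMeagre_of_isNowhereDense
  rw [hF.isNowhereDense_iff]
  by_contra hne
  obtain ⟨z, hz⟩ := hD.inter_open_nonempty _ isOpen_interior
    (nonempty_iff_ne_empty.2 hne)
  exact absurd (mem_inter (interior_subset hz.1) hz.2) (by rw [hdisj]; exact notMem_empty z)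

end Helpers

/-- If `cov(M) = cof(M)` then there is a set of reals with the Menger property
but without the Hurewicz property. -/
theorem covM_eq_cofM_menger_not_hurewicz (h : covMeager = cofMeager) :
    ∃ X : Set ℝ, MengerSet X ∧ ¬ HurewiczSet X := by
  classical
  obtain ⟨𝓕, hmk, hmeag, hcof⟩ := cofMeager_mem
  rw [← h] at hmk
  set ι := covMeager.ord.ToType with hι
  have hmkι : Cardinal.mk ι = Cardinal.mk 𝓕 := by
    rw [hmk, hι, Cardinal.mk_toType, Cardinal.card_ord]
  obtain ⟨e⟩ : Nonempty (ι ≃ 𝓕) := Cardinal.eq.1 hmkι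
  set M : ι → Set ℝ := fun a => (e a).1 with hM
  have hMmeag : ∀ a, IsMeagre (M a) := fun a => hmeag _ (e a).2
  have hMcof : ∀ W : Set ℝ, IsMeagre W → ∃ a, W ⊆ M a := by
    intro W hW
    obtain ⟨F, hF, hsub⟩ := hcof W hW
    refine ⟨e.symm ⟨F, hF⟩, ?_⟩
    simpa [hM] using hsub
  set Q : Set ℝ := range ((↑) : ℚ → ℝ) with hQ
  set D : Set ℝ := range (fun q : ℚ => (q : ℝ) + Real.sqrt 2) with hD
  have hQdense : Dense Q := Rat.denseRange_cast
  have hDdense : Dense D := by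
    rw [dense_iff_exists_between]
    intro a b hab
    obtain ⟨q, hq1, hq2⟩ := exists_rat_btwn (sub_lt_sub_right hab (Real.sqrt 2))
    exact ⟨(q : ℝ) + Real.sqrt 2, ⟨q, rfl⟩, by linarith, by linarith⟩
  have hQD : ∀ z ∈ Q, z ∉ D := by
    rintro z ⟨q, rfl⟩ ⟨p, hp⟩
    have hp' : (p : ℝ) + Real.sqrt 2 = (q : ℝ) := hp
    have : Real.sqrt 2 = ((q - p : ℚ) : ℝ) := by push_cast; linarith
    exact irrational_sqrt_two (this ▸ ⟨q - p, rfl⟩)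
  have hQcount : Q.Countable := countable_range _
  have hDcount : D.Countable := countable_range _
  -- choose the Luzin-type points
  have hchoice : ∀ a : ι, ∃ r : ℝ, (∀ b ≤ a, r ∉ M b) ∧ r ∉ Q ∧ r ∉ D := by
    intro a
    set 𝓖 : Set (Set ℝ) := (M '' Iic a) ∪ ((fun z : ℝ => ({z} : Set ℝ)) '' (Q ∪ D)) with h𝓖
    have hm : ∀ W ∈ 𝓖, IsMeagre W := by
      rintro W (⟨b, _, rfl⟩ | ⟨z, _, rfl⟩)
      · exact hMmeag b
      · exact myMeagre_singleton z
    have hcard : Cardinal.mk 𝓖 < covMeager := by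
      have h1 : Cardinal.mk (M '' Iic a) < covMeager := by
        refine lt_of_le_of_lt Cardinal.mk_image_le ?_
        have hIic : Cardinal.mk (Iic a) ≤ Cardinal.mk (Iio a) + 1 := by
          rw [← Set.Iio_insert]; exact Cardinal.mk_insert_le
        refine lt_of_le_of_lt hIic (Cardinal.add_lt_of_lt aleph0_lt_covMeager.le
          (Cardinal.mk_Iio_ord_toType a) ?_)
        exact lt_trans Cardinal.one_lt_aleph0 aleph0_lt_covMeager
      have h2 : Cardinal.mk ((fun z : ℝ => ({z} : Set ℝ)) '' (Q ∪ D)) < covMeager := by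
        refine lt_of_le_of_lt ?_ aleph0_lt_covMeager
        exact Cardinal.le_aleph0_iff_set_countable.2 (((hQcount.union hDcount).image _))
      exact lt_of_le_of_lt (Cardinal.mk_union_le _ _)
        (Cardinal.add_lt_of_lt aleph0_lt_covMeager.le h1 h2)
    have hne := sUnion_ne_univ_of_lt_cov hm hcard
    obtain ⟨r, hr⟩ : ∃ r : ℝ, r ∉ ⋃₀ 𝓖 := by
      by_contra hco; push_neg at hco; exact hne (eq_univ_of_forall hco)
    refine ⟨r, fun b hb hrb => hr ⟨M b, Or.inl ⟨b, hb, rfl⟩, hrb⟩,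
      fun hrQ => hr ⟨{r}, Or.inr ⟨r, Or.inl hrQ, rfl⟩, rfl⟩,
      fun hrD => hr ⟨{r}, Or.inr ⟨r, Or.inr hrD, rfl⟩, rfl⟩⟩
  choose x hx1 hx2 hx3 using hchoice
  set L : Set ℝ := range x with hL
  set X : Set ℝ := L ∪ Q with hX
  have hXQ : Q ⊆ X := subset_union_right
  have hXD : ∀ z ∈ X, z ∉ D := by
    rintro z (⟨a, rfl⟩ | hzQ)
    · exact hx3 a
    · exact hQD z hzQ
  have hLnotmeagre : ¬ IsMeagre L := by
    intro hmg
    obtain ⟨a, ha⟩ := hMcof L hmg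
    exact hx1 a a le_rfl (ha ⟨a, rfl⟩)
  refine ⟨X, ?_, ?_⟩
  · -- Menger
    intro 𝒰 h𝒰
    have hTn : ∀ n, ∃ U : ℕ → Set ℝ, (∀ i, U i ∈ 𝒰 n) ∧ X ⊆ ⋃ i, U i := by
      intro n
      obtain ⟨T, hTc, hTsub, hTeq⟩ := TopologicalSpace.isOpen_sUnion_countable (𝒰 n) (h𝒰 n).1
      have hXT : X ⊆ ⋃₀ T := by rw [hTeq]; exact (h𝒰 n).2
      have hTne : T.Nonempty := by
        rcases eq_empty_or_nonempty T with hemp | hne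
        · exfalso
          have h0 : (0:ℝ) ∈ X := hXQ ⟨0, by norm_num⟩
          obtain ⟨t, ht, -⟩ := hXT h0
          rw [hemp] at ht
          exact notMem_empty t ht
        · exact hne
      obtain ⟨U, hU⟩ := hTc.exists_eq_range hTne
      refine ⟨U, fun i => hTsub (hU ▸ mem_range_self i), ?_⟩
      intro z hz
      obtain ⟨t, htT, hzt⟩ := hXT hz
      rw [hU] at htT
      obtain ⟨i, rfl⟩ := htT
      exact mem_iUnion.2 ⟨i, hzt⟩
    choose U hUmem hUcov using hTn
    set qq : ℕ → ℝ := fun k => (((Denumerable.eqv ℚ).symm k : ℚ) : ℝ) with hqq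
    have hqqQ : ∀ k, qq k ∈ Q := fun k => ⟨_, rfl⟩
    have hQqq : ∀ z ∈ Q, ∃ k, qq k = z := by
      rintro z ⟨q, rfl⟩
      exact ⟨(Denumerable.eqv ℚ) q, by simp [hqq]⟩
    have hcex : ∀ k, ∃ i, qq k ∈ U (2*k) i := fun k => mem_iUnion.1 (hUcov (2*k) (hXQ (hqqQ k)))
    choose c hc using hcex
    set Veven : Set ℝ := ⋃ k, U (2*k) (c k) with hV
    have hVopen : IsOpen Veven :=
      isOpen_iUnion (fun k => (h𝒰 (2*k)).1 _ (hUmem (2*k) (c k)))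
    have hQV : Q ⊆ Veven := by
      intro z hz
      obtain ⟨k, rfl⟩ := hQqq z hz
      exact mem_iUnion.2 ⟨k, hc k⟩
    have hWmeagre : IsMeagre Vevenᶜ := by
      refine meagre_of_closed_disjoint_dense (isClosed_compl_iff.2 hVopen) hQdense ?_
      rw [eq_empty_iff_forall_notMem]
      rintro z ⟨h1, h2⟩
      exact h1 (hQV h2)
    obtain ⟨a0, ha0⟩ := hMcof _ hWmeagre
    set S : Set ℝ := X \ Veven with hS
    have hSsub : S ⊆ x '' (Iio a0) := by
      rintro s ⟨hsX, hsV⟩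
      have hsM : s ∈ M a0 := ha0 hsV
      rcases hsX with ⟨b, rfl⟩ | hsQ
      · refine ⟨b, ?_, rfl⟩
        by_contra hb
        rw [mem_Iio, not_lt] at hb
        exact hx1 b a0 hb hsM
      · exact absurd (hQV hsQ) hsV
    have hfsex : ∀ s : ℝ, ∃ fs : ℕ → ℕ, s ∈ X → ∀ m, s ∈ U (2*m+1) (fs m) := by
      intro s
      by_cases hsX : s ∈ X
      · have hex : ∀ m, ∃ i, s ∈ U (2*m+1) i := fun m => mem_iUnion.1 (hUcov (2*m+1) hsX)
        choose fs hfs using hex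
        exact ⟨fs, fun _ => hfs⟩
      · exact ⟨fun _ => 0, fun hs => absurd hs hsX⟩
    choose fs hfs using hfsex
    have hHcard : Cardinal.mk (fs '' S) < covMeager := by
      refine lt_of_le_of_lt Cardinal.mk_image_le ?_
      refine lt_of_le_of_lt (Cardinal.mk_le_mk_of_subset hSsub) ?_
      exact lt_of_le_of_lt Cardinal.mk_image_le (Cardinal.mk_Iio_ord_toType a0)
    obtain ⟨g, hg⟩ := exists_dominator hHcard
    refine ⟨fun n => if n % 2 = 0 then {U n (c (n/2))}
      else (fun i => U n i) '' {i | i ≤ g (n/2)}, ?_, ?_⟩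
    · intro n
      beta_reduce
      split_ifs with hn
      · refine ⟨?_, finite_singleton _⟩
        intro W hW
        rw [mem_singleton_iff] at hW
        subst hW
        exact hUmem n _
      · constructor
        · rintro W ⟨i, -, rfl⟩
          exact hUmem n i
        · exact (Set.finite_Iic (g (n/2))).image _
    · intro z hz
      by_cases hzV : z ∈ Veven
      · obtain ⟨k, hk⟩ := mem_iUnion.1 hzV
        refine mem_iUnion.2 ⟨2*k, ?_⟩
        beta_reduce
        rw [if_pos (by omega : (2*k) % 2 = 0)]
        refine ⟨U (2*k) (c ((2*k)/2)), rfl, ?_⟩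
        rw [(by omega : (2*k)/2 = k)]
        exact hk
      · have hzS : z ∈ S := ⟨hz, hzV⟩
        obtain ⟨m, hm⟩ := hg (fs z) ⟨z, hzS, rfl⟩
        refine mem_iUnion.2 ⟨2*m+1, ?_⟩
        beta_reduce
        rw [if_neg (by omega : ¬ (2*m+1) % 2 = 0)]
        rw [(by omega : (2*m+1)/2 = m)]
        exact ⟨U (2*m+1) (fs z m), ⟨fs z m, hm, rfl⟩, hfs z hz m⟩
  · -- not Hurewicz
    intro hH
    set d : ℕ → ℝ := fun n => ((Denumerable.eqv ℚ).symm n : ℚ) + Real.sqrt 2 with hd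
    have hdD : ∀ n, d n ∈ D := fun n => ⟨(Denumerable.eqv ℚ).symm n, rfl⟩
    have hDd : ∀ z ∈ D, ∃ n, d n = z := by
      rintro z ⟨q, rfl⟩
      exact ⟨(Denumerable.eqv ℚ) q, by simp [hd]⟩
    set 𝒰 : ℕ → Set (Set ℝ) := fun n => {U : Set ℝ | IsOpen U ∧ ∀ k ≤ n, d k ∉ closure U} with h𝒰
    have hcover : ∀ n, (∀ U ∈ 𝒰 n, IsOpen U) ∧ X ⊆ ⋃₀ 𝒰 n := by
      intro n
      refine ⟨fun U hU => hU.1, ?_⟩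
      intro z hz
      have hzd : ∀ k, z ≠ d k := fun k he => hXD z hz (he ▸ hdD k)
      set r : ℝ := (Finset.range (n+1)).inf' (by simp) (fun k => dist z (d k)) with hr
      have hrpos : 0 < r := by
        rw [hr, Finset.lt_inf'_iff]
        intro k _
        exact dist_pos.2 (hzd k)
      refine ⟨Metric.ball z (r/2), ⟨Metric.isOpen_ball, ?_⟩, Metric.mem_ball_self (by linarith)⟩
      intro k hk hmem
      have h1 : dist (d k) z ≤ r / 2 :=
        Metric.closure_ball_subset_closedBall hmem
      have h2 : r ≤ dist z (d k) := by
        rw [hr]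
        exact Finset.inf'_le _ (Finset.mem_range.2 (by omega))
      rw [dist_comm] at h1
      linarith
    obtain ⟨𝒱, h𝒱sub, h𝒱mem⟩ := hH 𝒰 hcover
    set F : ℕ → Set ℝ := fun m => ⋂ n ∈ {n' : ℕ | m ≤ n'}, closure (⋃₀ 𝒱 n) with hF
    have hFclosed : ∀ m, IsClosed (F m) := fun m =>
      isClosed_biInter (fun n _ => isClosed_closure)
    have hFD : ∀ m, F m ∩ D = ∅ := by
      intro m
      rw [eq_empty_iff_forall_notMem]
      rintro z ⟨hzF, hzD⟩
      obtain ⟨k, rfl⟩ := hDd z hzD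
      have hn : d k ∈ closure (⋃₀ 𝒱 (max m k)) := by
        exact mem_iInter₂.1 hzF (max m k) (le_max_left m k)
      rw [Set.Finite.closure_sUnion (h𝒱sub (max m k)).2] at hn
      obtain ⟨U, hU, hdU⟩ := mem_iUnion₂.1 hn
      exact ((h𝒱sub (max m k)).1 hU).2 k (le_max_right m k) hdU
    have hFmeagre : ∀ m, IsMeagre (F m) :=
      fun m => meagre_of_closed_disjoint_dense (hFclosed m) hDdense (hFD m)
    have hXsub : X ⊆ ⋃ m, F m := by
      intro z hz
      obtain ⟨m, hm⟩ := eventually_atTop.1 (h𝒱mem z hz)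
      exact mem_iUnion.2 ⟨m, mem_iInter₂.2 (fun n hn => subset_closure (hm n hn))⟩
    have : IsMeagre L := (isMeagre_iUnion hFmeagre).mono (subset_union_left.trans hXsub)
    exact hLnotmeagre this
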